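/- Let r, c, k be integers with 1 ≤ c ≤ r − 2, k ≥ 2, c·k > r. Then ∑_{j=0}^{c−1} (−1)^j C((c−1−j)·k − 1, r − 1)·C(c−1, j) ≥ 0 and ∑_{i=0}^{c} (−1)^i C((c−i)·k − 1, r − 1)·C(c, i) > 0, where binomials with negative top are zero. -/

import Mathlib

open Finset

/-- Binomial coefficient with integer top, zero for negative top. -/
def ichoose (n : ℤ) (m : ℕ) : ℤ := if n < 0 then 0 else ((n.toNat).choose m : ℤ)

open PowerSeries

noncomputable def geomPS (k : ℕ) : PowerSeries ℤ := ∑ i ∈ Finset.range k, (X : PowerSeries ℤ) ^ i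

lemma coeff_geomPS (k n : ℕ) : (coeff n) (geomPS k) = if n < k then 1 else 0 := by
  rw [geomPS, map_sum]
  simp only [coeff_X_pow]
  rw [Finset.sum_ite_eq]
  simp [Finset.mem_range]

lemma coeff_geomPS_nonneg (k n : ℕ) : 0 ≤ (coeff n) (geomPS k) := by
  rw [coeff_geomPS]; split <;> norm_num

lemma coeff_geomPS_pow_nonneg (k m : ℕ) : ∀ n, 0 ≤ (coeff n) (geomPS k ^ m) := by
  induction m with
  | zero => intro n; simp [coeff_one]; split <;> norm_num
  | succ m ih =>
    intro n
    rw [pow_succ, coeff_mul]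
    exact Finset.sum_nonneg fun p _ => mul_nonneg (ih p.1) (coeff_geomPS_nonneg k p.2)

lemma coeff_geomPS_pow_pos (k : ℕ) (hk : 1 ≤ k) (m : ℕ) :
    ∀ n, n ≤ m * (k - 1) → 0 < (coeff n) (geomPS k ^ m) := by
  induction m with
  | zero =>
    intro n hn
    simp only [Nat.zero_mul, Nat.le_zero] at hn
    subst hn; simp
  | succ m ih =>
    intro n hn
    rw [Nat.succ_mul] at hn
    set a : ℕ := min n (m * (k - 1)) with ha
    have hab : a + (n - a) = n := by omega
    have hb : n - a < k := by omega
    rw [pow_succ, coeff_mul]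
    apply Finset.sum_pos' (fun p _ => mul_nonneg (coeff_geomPS_pow_nonneg k m p.1)
      (coeff_geomPS_nonneg k p.2))
    refine ⟨(a, n - a), Finset.HasAntidiagonal.mem_antidiagonal.2 hab, ?_⟩
    have h1 : 0 < (coeff a) (geomPS k ^ m) := ih a (by omega)
    have h2 : (coeff (n - a)) (geomPS k) = 1 := by rw [coeff_geomPS, if_pos hb]
    simp only [h2, mul_one]
    exact h1

lemma one_sub_X_pow (k : ℕ) : (1 - X ^ k : PowerSeries ℤ) = geomPS k * (1 - X) := by
  have h := geom_sum_mul (X : PowerSeries ℤ) k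
  rw [geomPS]
  linear_combination h

lemma invOneSubPow_val_mul (d : ℕ) :
    (invOneSubPow ℤ d).val * (1 - X) ^ d = 1 := by
  rw [← invOneSubPow_inv_eq_one_sub_pow]
  exact (invOneSubPow ℤ d).val_inv

lemma key_eq (k r m : ℕ) (hm : m ≤ r) :
    ((1 : PowerSeries ℤ) - X ^ k) ^ m * (invOneSubPow ℤ r).val
      = geomPS k ^ m * (invOneSubPow ℤ (r - m)).val := by
  have e1 := invOneSubPow_val_mul r
  have e2 := invOneSubPow_val_mul (r - m)
  have e3 : ((1 : PowerSeries ℤ) - X) ^ m * (1 - X) ^ (r - m) = (1 - X) ^ r := by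
    rw [← pow_add]; congr 1; omega
  calc ((1 : PowerSeries ℤ) - X ^ k) ^ m * (invOneSubPow ℤ r).val
      = geomPS k ^ m * ((1 - X) ^ m * (invOneSubPow ℤ r).val) := by
        rw [one_sub_X_pow, mul_pow]; ring
    _ = geomPS k ^ m * ((1 - X) ^ m * (invOneSubPow ℤ r).val
          * ((invOneSubPow ℤ (r - m)).val * (1 - X) ^ (r - m))) := by rw [e2, mul_one]
    _ = geomPS k ^ m * (((invOneSubPow ℤ r).val * ((1 - X) ^ m * (1 - X) ^ (r - m)))
          * (invOneSubPow ℤ (r - m)).val) := by ring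
    _ = geomPS k ^ m * (invOneSubPow ℤ (r - m)).val := by rw [e3, e1, one_mul]

lemma coeff_invOneSubPow_nonneg (d n : ℕ) : 0 ≤ (coeff n) (invOneSubPow ℤ d).val := by
  cases d with
  | zero => rw [invOneSubPow_zero]; simp [coeff_one]; split <;> norm_num
  | succ d => rw [invOneSubPow_val_succ_eq_mk_add_choose, coeff_mk]; positivity

lemma coeff_zero_invOneSubPow (d : ℕ) : (coeff 0) (invOneSubPow ℤ d).val = 1 := by
  cases d with
  | zero => rw [invOneSubPow_zero]; simp
  | succ d => rw [invOneSubPow_val_succ_eq_mk_add_choose, coeff_mk]; simp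

lemma ichoose_eq_zero {t : ℤ} {m : ℕ} (h : t < m) : ichoose t m = 0 := by
  unfold ichoose
  split
  · rfl
  · next h' => rw [Nat.choose_eq_zero_of_lt (by omega), Nat.cast_zero]

lemma ichoose_shift (r k n i : ℕ) (hr : 1 ≤ r) :
    ichoose ((n : ℤ) - i * k + r - 1) (r - 1)
      = if k * i ≤ n then ((r - 1 + (n - k * i)).choose (r - 1) : ℤ) else 0 := by
  have hcast : (n : ℤ) - i * k + r - 1 = (n : ℤ) - (k * i : ℕ) + r - 1 := by push_cast; ring
  rw [hcast]
  generalize k * i = s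
  rcases le_or_gt s n with h | h
  · rw [if_pos h]
    unfold ichoose
    rw [if_neg (by omega)]
    congr 2
    omega
  · rw [if_neg (by omega)]
    exact ichoose_eq_zero (by omega)

lemma sum_eq_coeff (k r m n : ℕ) (hr : 1 ≤ r) :
    ∑ i ∈ Finset.range (m + 1),
        (-1 : ℤ) ^ i * ichoose ((n : ℤ) - i * k + r - 1) (r - 1) * (m.choose i : ℤ)
      = (coeff n) (((1 : PowerSeries ℤ) - X ^ k) ^ m * (invOneSubPow ℤ r).val) := by
  have hbin : ((1 : PowerSeries ℤ) - X ^ k) ^ m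
      = ∑ i ∈ Finset.range (m + 1),
          C ((-1) ^ i * (m.choose i : ℤ)) * X ^ (k * i) := by
    rw [show (1 - X ^ k : PowerSeries ℤ) = -X ^ k + 1 by ring, add_pow]
    refine Finset.sum_congr rfl fun i _ => ?_
    rw [one_pow, mul_one, neg_pow, ← pow_mul, map_mul]
    rw [show C ((-1 : ℤ) ^ i) = (-1 : PowerSeries ℤ) ^ i by rw [map_pow, map_neg, map_one]]
    rw [map_natCast C (m.choose i)]
    ring
  rw [hbin, Finset.sum_mul, map_sum]
  refine Finset.sum_congr rfl fun i _ => ?_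
  conv_rhs => rw [mul_assoc]
  rw [coeff_C_mul, coeff_X_pow_mul']
  rw [ichoose_shift r k n i hr]
  rw [invOneSubPow_val_eq_mk_sub_one_add_choose_of_pos ℤ r hr, coeff_mk]
  split
  · ring
  · ring

lemma coeff_prod_nonneg (k m d n : ℕ) :
    0 ≤ (coeff n) (geomPS k ^ m * (invOneSubPow ℤ d).val) := by
  rw [coeff_mul]
  exact Finset.sum_nonneg fun p _ =>
    mul_nonneg (coeff_geomPS_pow_nonneg k m p.1) (coeff_invOneSubPow_nonneg d p.2)

lemma coeff_prod_pos (k m d n : ℕ) (hk : 1 ≤ k) (hn : n ≤ m * (k - 1)) :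
    0 < (coeff n) (geomPS k ^ m * (invOneSubPow ℤ d).val) := by
  rw [coeff_mul]
  apply Finset.sum_pos' (fun p _ =>
    mul_nonneg (coeff_geomPS_pow_nonneg k m p.1) (coeff_invOneSubPow_nonneg d p.2))
  refine ⟨(n, 0), Finset.HasAntidiagonal.mem_antidiagonal.2 (by omega), ?_⟩
  rw [coeff_zero_invOneSubPow, mul_one]
  exact coeff_geomPS_pow_pos k hk m n hn

/-- The two alternating binomial sums appearing in the slope-inequality computation are
respectively nonnegative and strictly positive. -/
theorem stmt_11 (r c k : ℕ) (hc1 : 1 ≤ c) (hc2 : c ≤ r - 2) (hk : 2 ≤ k) (hck : r < c * k) :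
    0 ≤ ∑ j ∈ Finset.range c,
          (-1 : ℤ) ^ j * ichoose (((c : ℤ) - 1 - j) * k - 1) (r - 1)
            * (Nat.choose (c - 1) j : ℤ) ∧
    0 < ∑ i ∈ Finset.range (c + 1),
          (-1 : ℤ) ^ i * ichoose (((c : ℤ) - i) * k - 1) (r - 1)
            * (Nat.choose c i : ℤ) := by
  have hr3 : 3 ≤ r := by omega
  have hr : 1 ≤ r := by omega
  constructor
  · -- first sum, m = c - 1
    rcases le_or_gt r ((c - 1) * k) with hA | hB
    · -- (c-1)*k ≥ r : the sum is a coefficient of the nonneg series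
      set n : ℕ := (c - 1) * k - r with hn
      have hn1 : (n : ℤ) = ((c - 1 : ℕ) : ℤ) * k - r := by
        rw [hn, Nat.cast_sub hA, Nat.cast_mul]
      have hterm : ∀ j : ℕ, ((c : ℤ) - 1 - j) * k - 1 = (n : ℤ) - j * k + r - 1 := by
        intro j
        rw [hn1]
        have : ((c - 1 : ℕ) : ℤ) = (c : ℤ) - 1 := by
          rw [Nat.cast_sub hc1]; norm_num
        rw [this]; ring
      have hrw : ∑ j ∈ Finset.range c,
            (-1 : ℤ) ^ j * ichoose (((c : ℤ) - 1 - j) * k - 1) (r - 1)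
              * (Nat.choose (c - 1) j : ℤ)
          = ∑ j ∈ Finset.range ((c - 1) + 1),
            (-1 : ℤ) ^ j * ichoose ((n : ℤ) - j * k + r - 1) (r - 1)
              * (Nat.choose (c - 1) j : ℤ) := by
        rw [show (c - 1) + 1 = c by omega]
        exact Finset.sum_congr rfl fun j _ => by rw [hterm j]
      rw [hrw, sum_eq_coeff k r (c - 1) n hr, key_eq k r (c - 1) (by omega)]
      exact coeff_prod_nonneg k (c - 1) (r - (c - 1)) n
    · -- (c-1)*k < r : every term vanishes
      have hzero : ∀ j ∈ Finset.range c,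
          (-1 : ℤ) ^ j * ichoose (((c : ℤ) - 1 - j) * k - 1) (r - 1)
            * (Nat.choose (c - 1) j : ℤ) = 0 := by
        intro j _
        have h1 : ((c : ℤ) - 1 - j) ≤ ((c - 1 : ℕ) : ℤ) := by
          rw [Nat.cast_sub hc1]; push_cast; omega
        have h2 : ((c : ℤ) - 1 - j) * k ≤ ((c - 1 : ℕ) : ℤ) * (k : ℕ) :=
          mul_le_mul_of_nonneg_right h1 (by positivity)
        have h3 : ((c - 1 : ℕ) : ℤ) * (k : ℕ) = (((c - 1) * k : ℕ) : ℤ) := by push_cast; ring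
        have h4 : ((c : ℤ) - 1 - j) * k - 1 < ((r - 1 : ℕ) : ℤ) := by
          rw [h3] at h2
          have : (((c - 1) * k : ℕ) : ℤ) < (r : ℤ) := by exact_mod_cast hB
          have h5 : ((r - 1 : ℕ) : ℤ) = (r : ℤ) - 1 := by
            rw [Nat.cast_sub hr]; norm_num
          omega
        rw [ichoose_eq_zero h4, mul_zero, zero_mul]
      rw [Finset.sum_eq_zero hzero]
  · -- second sum, m = c
    set n : ℕ := c * k - r with hn
    have hn1 : (n : ℤ) = (c : ℤ) * k - r := by
      rw [hn, Nat.cast_sub hck.le, Nat.cast_mul]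
    have hterm : ∀ i : ℕ, ((c : ℤ) - i) * k - 1 = (n : ℤ) - i * k + r - 1 := by
      intro i; rw [hn1]; ring
    have hrw : ∑ i ∈ Finset.range (c + 1),
          (-1 : ℤ) ^ i * ichoose (((c : ℤ) - i) * k - 1) (r - 1)
            * (Nat.choose c i : ℤ)
        = ∑ i ∈ Finset.range (c + 1),
          (-1 : ℤ) ^ i * ichoose ((n : ℤ) - i * k + r - 1) (r - 1)
            * (Nat.choose c i : ℤ) :=
      Finset.sum_congr rfl fun i _ => by rw [hterm i]
    rw [hrw, sum_eq_coeff k r c n hr, key_eq k r c (by omega)]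
    apply coeff_prod_pos k c (r - c) n (by omega)
    have hkk : c * (k - 1) + c * 1 = c * k := by
      rw [← Nat.mul_add]; congr 1; omega
    omega
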